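/- The C-element trace structure satisfies rule R₃′ (the synchronization class condition): for any trace s and distinct symbols x ≠ y in the alphabet, if sx and sy are both traces then sxy is a trace. -/

import Mathlib

/-- A trace structure: input alphabet, output alphabet, and a set of traces. -/
structure TraceStructure (α : Type*) where
  i : Set α
  o : Set α
  t : Set (List α)

namespace TraceStructure

variable {α : Type*}

/-- Total alphabet. -/
def alph (R : TraceStructure α) : Set α := R.i ∪ R.o

/-- Projection of a trace onto an alphabet: delete all symbols not in `A`. -/
noncomputable def projT (A : Set α) (w : List α) : List α :=
  w.filter (fun x => @decide (x ∈ A) (Classical.propDecidable _))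

/-- Reflection: swap input and output alphabets. -/
def reflect (R : TraceStructure α) : TraceStructure α := ⟨R.o, R.i, R.t⟩

/-- Weave of two trace structures. -/
noncomputable def weave (R S : TraceStructure α) : TraceStructure α :=
  ⟨R.i ∪ S.i, R.o ∪ S.o,
   {w | (∀ x ∈ w, x ∈ R.alph ∪ S.alph) ∧ projT R.alph w ∈ R.t ∧ projT S.alph w ∈ S.t}⟩

/-- Union of two trace structures. -/
def tsUnion (R S : TraceStructure α) : TraceStructure α :=
  ⟨R.i ∪ S.i, R.o ∪ S.o, R.t ∪ S.t⟩

/-- Projection of a trace structure onto an alphabet `A`. -/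
noncomputable def tsProj (R : TraceStructure α) (A : Set α) : TraceStructure α :=
  ⟨R.i ∩ A, R.o ∩ A, {w | ∃ u ∈ R.t, w = projT A u}⟩

/-- Prefix closure of a set of traces. -/
def prefSet (T : Set (List α)) : Set (List α) := {s | ∃ u, s ++ u ∈ T}

/-- Prefix closure of a trace structure. -/
def pref (R : TraceStructure α) : TraceStructure α := ⟨R.i, R.o, prefSet R.t⟩

/-- Kleene star (arbitrary repetition) of a set of traces. -/
def star (L : Set (List α)) : Set (List α) :=
  {w | ∃ ls : List (List α), (∀ u ∈ ls, u ∈ L) ∧ w = ls.flatten}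

/-- A set of traces is prefix-closed. -/
def PrefixClosed (T : Set (List α)) : Prop := ∀ s u : List α, s ++ u ∈ T → s ∈ T

/-- Rule R₀: no two consecutive transitions on the same wire. -/
def SatR0 (R : TraceStructure α) : Prop :=
  ∀ s ∈ R.t, ∀ x ∈ R.alph, s ++ [x, x] ∉ R.t

/-- Rule R₁: symbols of the same type commute. -/
def SatR1 (R : TraceStructure α) : Prop :=
  ∀ (s t : List α) (x y : α),
    ((x ∈ R.i ∧ y ∈ R.i) ∨ (x ∈ R.o ∧ y ∈ R.o)) →
    (s ++ [x, y] ++ t ∈ R.t ↔ s ++ [y, x] ++ t ∈ R.t)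

/-- Rule R₂′. -/
def SatR2' (R : TraceStructure α) : Prop :=
  ∀ (s t : List α) (x y z : α),
    ((x ∈ R.i ∧ z ∈ R.i ∧ y ∈ R.o) ∨ (x ∈ R.o ∧ z ∈ R.o ∧ y ∈ R.i)) →
    s ++ [x, y] ++ t ++ [z] ∈ R.t → s ++ [y, x] ++ t ∈ R.t →
    s ++ [y, x] ++ t ++ [z] ∈ R.t

/-- Rule R₃′ (synchronization class). -/
def SatR3' (R : TraceStructure α) : Prop :=
  ∀ (s : List α) (x y : α), x ≠ y → x ∈ R.alph → y ∈ R.alph →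
    s ++ [x] ∈ R.t → s ++ [y] ∈ R.t → s ++ [x, y] ∈ R.t

/-- Rule R₃′′ (data communication class). -/
def SatR3'' (R : TraceStructure α) : Prop :=
  ∀ (s : List α) (x y : α), x ≠ y → x ∈ R.alph → y ∈ R.alph →
    ¬(x ∈ R.i ∧ y ∈ R.i) →
    s ++ [x] ∈ R.t → s ++ [y] ∈ R.t → s ++ [x, y] ∈ R.t

/-- Rule R₃′′′ (arbitration class). -/
def SatR3''' (R : TraceStructure α) : Prop :=
  ∀ (s : List α) (x y : α),
    ((x ∈ R.i ∧ y ∈ R.o) ∨ (x ∈ R.o ∧ y ∈ R.i)) →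
    s ++ [x] ∈ R.t → s ++ [y] ∈ R.t → s ++ [x, y] ∈ R.t

/-- The WIRE component `pref *[a?; b!]`. -/
def wire (a b : α) : TraceStructure α :=
  ⟨{a}, {b}, prefSet (star {[a, b]})⟩

/-- The C-element `pref *[(a? || b?); c!]`. -/
def cElement (a b c : α) : TraceStructure α :=
  ⟨{a, b}, {c}, prefSet (star ({[a, b, c], [b, a, c]} : Set (List α)))⟩

/-- Interleaving (shuffle) of two traces. -/
inductive Interleave : List α → List α → List α → Prop
  | nil : Interleave [] [] []
  | left {x : α} {u v t : List α} : Interleave u v t → Interleave (x :: u) v (x :: t)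
  | right {x : α} {u v t : List α} : Interleave u v t → Interleave u (x :: v) (x :: t)

end TraceStructure

open TraceStructure

section Aux
variable {α : Type*} (a b c : α)

private def cL (a b c : α) : Set (List α) := ({[a, b, c], [b, a, c]} : Set (List α))

private lemma star_append_block {j t : List α} (hj : j ∈ star (cL a b c)) (ht : t ∈ cL a b c) :
    j ++ t ∈ star (cL a b c) := by
  obtain ⟨ls, h1, rfl⟩ := hj
  refine ⟨ls ++ [t], ?_, by simp⟩
  intro u hu
  rcases List.mem_append.1 hu with h | h
  · exact h1 u h
  · simp at h; subst h; exact ht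

private lemma star_length3 {j : List α} (hj : j ∈ star (cL a b c)) : j.length % 3 = 0 := by
  obtain ⟨ls, h1, rfl⟩ := hj
  induction ls with
  | nil => simp
  | cons hd tl ih =>
    have hhd := h1 hd (by simp)
    have htl := ih (fun u hu => h1 u (by simp [hu]))
    rcases hhd with h | h <;> subst h <;> simp [List.flatten] at * <;> omega

private lemma star_last {j : List α} (hj : j ∈ star (cL a b c)) :
    j = [] ∨ ∃ j', j = j' ++ [c] := by
  obtain ⟨ls, h1, rfl⟩ := hj
  induction ls with
  | nil => simp
  | cons hd tl ih =>
    have hhd := h1 hd (by simp)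
    rcases ih (fun u hu => h1 u (by simp [hu])) with h | ⟨j', h⟩
    · rcases hhd with h2 | h2 <;> subst h2 <;> right
      · exact ⟨[a,b], by simp [h]⟩
      · exact ⟨[b,a], by simp [h]⟩
    · right
      exact ⟨hd ++ j', by simp [h]⟩

private lemma pref_classify : ∀ (ls : List (List α)), (∀ u ∈ ls, u ∈ cL a b c) →
    ∀ w u : List α, w ++ u = ls.flatten →
    ∃ j ∈ star (cL a b c),
      w = j ∨ w = j ++ [a] ∨ w = j ++ [b] ∨ w = j ++ [a, b] ∨ w = j ++ [b, a] := by
  intro ls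
  induction ls with
  | nil =>
    intro _ w u h
    simp at h
    exact ⟨[], ⟨[], by simp⟩, by simp [h.1]⟩
  | cons hd tl ih =>
    intro hls w u h
    have hhd := hls hd (by simp)
    simp only [List.flatten] at h
    rcases List.append_eq_append_iff.1 h with ⟨a', ha1, ha2⟩ | ⟨c', hc1, hc2⟩
    · -- hd = w ++ a' : w is a prefix of hd
      have hemp : ([] : List α) ∈ star (cL a b c) := ⟨[], by simp⟩
      rcases hhd with h2 | h2 <;> subst h2 <;>
        match w, ha1 with
        | [], _ => exact ⟨[], hemp, by simp⟩
        | [z1], hq => ?_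
        | [z1,z2], hq => ?_
        | [z1,z2,z3], hq => ?_
        | (z1::z2::z3::z4::w'), hq => ?_
      · simp at hq; exact ⟨[], hemp, by simp [hq.1]⟩
      · simp at hq; exact ⟨[], hemp, by simp [hq.1, hq.2.1]⟩
      · simp at hq
        exact ⟨[a,b,c], ⟨[[a,b,c]], by simp [cL]⟩, by simp [hq.1, hq.2.1, hq.2.2.1]⟩
      · simp at hq
      · simp at hq; exact ⟨[], hemp, by simp [hq.1]⟩
      · simp at hq; exact ⟨[], hemp, by simp [hq.1, hq.2.1]⟩
      · simp at hq
        exact ⟨[b,a,c], ⟨[[b,a,c]], by simp [cL]⟩, by simp [hq.1, hq.2.1, hq.2.2.1]⟩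
      · simp at hq
    · -- w = hd ++ c'
      obtain ⟨j', hj', hcase⟩ := ih (fun u hu => hls u (by simp [hu])) c' u hc2.symm
      refine ⟨hd ++ j', ?_, ?_⟩
      · obtain ⟨ls', h1', rfl⟩ := hj'
        refine ⟨hd :: ls', ?_, by simp⟩
        intro v hv
        rcases List.mem_cons.1 hv with h3 | h3
        · subst h3; exact hhd
        · exact h1' v h3
      · subst hc1
        rcases hcase with h3 | h3 | h3 | h3 | h3 <;> subst h3 <;> simp [List.append_assoc] <;> tauto

end Aux

section Main
variable {α : Type*} {a b c : α}

private lemma ext_classify (hab : a ≠ b) (hac : a ≠ c) (hbc : b ≠ c)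
    {s : List α} {x : α} (h : s ++ [x] ∈ prefSet (star (cL a b c))) :
    (x = c ∧ (s.length + 1) % 3 = 0) ∨
    (∃ j ∈ star (cL a b c), s = j ∧ (x = a ∨ x = b) ∧ s.length % 3 = 0) ∨
    (∃ j : List α, ((s = j ++ [a] ∧ x = b) ∨ (s = j ++ [b] ∧ x = a)) ∧ s.length % 3 = 1) := by
  obtain ⟨u, hu⟩ := h
  obtain ⟨ls, hls, hj⟩ := hu
  obtain ⟨j, hjstar, hcase⟩ := pref_classify a b c ls hls (s ++ [x]) u hj
  have hlen := star_length3 a b c hjstar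
  rcases hcase with h1 | h1 | h1 | h1 | h1
  · rcases star_last a b c hjstar with h2 | ⟨j', h2⟩
    · simp [h2] at h1
    · subst h2
      have h34 := List.append_inj' h1 rfl
      refine Or.inl ⟨by simpa using h34.2, ?_⟩
      rw [h34.1]
      simp only [List.length_append, List.length_cons, List.length_nil] at hlen ⊢
      omega
  · have h34 := List.append_inj' h1 rfl
    exact Or.inr (Or.inl ⟨j, hjstar, h34.1, Or.inl (by simpa using h34.2),
      by rw [h34.1]; exact hlen⟩)
  · have h34 := List.append_inj' h1 rfl
    exact Or.inr (Or.inl ⟨j, hjstar, h34.1, Or.inr (by simpa using h34.2),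
      by rw [h34.1]; exact hlen⟩)
  · rw [show j ++ [a, b] = (j ++ [a]) ++ [b] by simp] at h1
    have h34 := List.append_inj' h1 rfl
    refine Or.inr (Or.inr ⟨j, Or.inl ⟨h34.1, by simpa using h34.2⟩, ?_⟩)
    rw [h34.1]
    simp only [List.length_append, List.length_cons, List.length_nil]
    omega
  · rw [show j ++ [b, a] = (j ++ [b]) ++ [a] by simp] at h1
    have h34 := List.append_inj' h1 rfl
    refine Or.inr (Or.inr ⟨j, Or.inr ⟨h34.1, by simpa using h34.2⟩, ?_⟩)
    rw [h34.1]
    simp only [List.length_append, List.length_cons, List.length_nil]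
    omega

private lemma main_lemma (hab : a ≠ b) (hac : a ≠ c) (hbc : b ≠ c)
    {s : List α} {x y : α} (hxy : x ≠ y)
    (hsx : s ++ [x] ∈ prefSet (star (cL a b c)))
    (hsy : s ++ [y] ∈ prefSet (star (cL a b c))) :
    s ++ [x, y] ∈ prefSet (star (cL a b c)) := by
  rcases ext_classify hab hac hbc hsx with ⟨hx1, hx2⟩ | ⟨j, hjs, hsj, hx1, hx2⟩ |
      ⟨j, hx1, hx2⟩ <;>
    rcases ext_classify hab hac hbc hsy with ⟨hy1, hy2⟩ | ⟨j', hjs', hsj', hy1, hy2⟩ |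
      ⟨j', hy1, hy2⟩
  · exact absurd (hx1.trans hy1.symm) hxy
  · omega
  · omega
  · omega
  · -- main case: s = j ∈ star, x,y ∈ {a,b}
    subst hsj
    refine ⟨[c], ?_⟩
    have hblk : [x, y, c] ∈ cL a b c := by
      rcases hx1 with rfl | rfl <;> rcases hy1 with h | h
      · exact absurd h.symm hxy
      · rw [h]; exact Or.inl rfl
      · rw [h]; exact Or.inr rfl
      · exact absurd h.symm hxy
    have := star_append_block a b c hjs hblk
    simpa using this
  · omega
  · omega
  · omega
  · -- both length ≡ 1
    rcases hx1 with ⟨hs1, hx⟩ | ⟨hs1, hx⟩ <;> rcases hy1 with ⟨hs2, hy⟩ | ⟨hs2, hy⟩ <;>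
      subst hx <;> subst hy
    · exact absurd rfl hxy
    · rw [hs1] at hs2
      exact absurd (by simpa using (List.append_inj' hs2 rfl).2) hab
    · rw [hs1] at hs2
      have h5 := (List.append_inj' hs2 rfl).2
      simp only [List.cons.injEq, and_true] at h5
      exact absurd h5.symm hab
    · exact absurd rfl hxy

end Main


theorem cElement_satR3' {α : Type*} (a b c : α)
    (hab : a ≠ b) (hac : a ≠ c) (hbc : b ≠ c) :
    SatR3' (cElement a b c) := by
  intro s x y hxy _ _ hsx hsy
  exact main_lemma hab hac hbc hxy hsx hsy
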